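/- Define h : ℝ → ℝ by h(u) = (u + sinh u · cosh u)/cosh²u. Then: h is an odd function; h(0) = 0; h is strictly increasing on [0, τ/2]; h(τ/2) = τ/2; h is strictly decreasing on [τ/2, ∞); and h(u) → 1 as u → +∞. -/

import Mathlib

/-- The function `h(u) = (u + sinh u cosh u)/cosh²u`. -/
noncomputable def hFun (u : ℝ) : ℝ := (u + Real.sinh u * Real.cosh u) / Real.cosh u ^ 2

open Real Filter Set

lemma hasDerivAt_hFun (u : ℝ) :
    HasDerivAt hFun (2 * (Real.cosh u - u * Real.sinh u) / Real.cosh u ^ 3) u := by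
  have hc : Real.cosh u ≠ 0 := (Real.cosh_pos u).ne'
  have hN : HasDerivAt (fun u => u + Real.sinh u * Real.cosh u)
      (1 + (Real.cosh u * Real.cosh u + Real.sinh u * Real.sinh u)) u :=
    (hasDerivAt_id u).add ((Real.hasDerivAt_sinh u).mul (Real.hasDerivAt_cosh u))
  have hD : HasDerivAt (fun u => Real.cosh u ^ 2) (2 * Real.cosh u ^ 1 * Real.sinh u) u :=
    (Real.hasDerivAt_cosh u).pow 2
  have := hN.div hD (by positivity)
  convert this using 1
  have hsq : Real.cosh u ^ 2 = Real.sinh u ^ 2 + 1 := Real.cosh_sq u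
  all_goals try rfl
  rw [div_eq_div_iff (by positivity) (by positivity)]
  linear_combination (-Real.cosh u ^ 5) * Real.cosh_sq u

lemma deriv_hFun (u : ℝ) :
    deriv hFun u = 2 * (Real.cosh u - u * Real.sinh u) / Real.cosh u ^ 3 :=
  (hasDerivAt_hFun u).deriv

lemma gAnti : StrictAntiOn (fun u => Real.cosh u - u * Real.sinh u) (Set.Ici (0:ℝ)) := by
  apply strictAntiOn_of_deriv_neg (convex_Ici 0)
  · exact (Real.continuous_cosh.sub (continuous_id.mul Real.continuous_sinh)).continuousOn
  · intro x hx
    rw [interior_Ici] at hx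
    have hd : HasDerivAt (fun u => Real.cosh u - u * Real.sinh u) (-(x * Real.cosh x)) x := by
      have := (Real.hasDerivAt_cosh x).sub ((hasDerivAt_id x).mul (Real.hasDerivAt_sinh x))
      convert this using 1; all_goals try rfl
      simp only [id_eq]; ring
    rw [hd.deriv]
    rw [Set.mem_Ioi] at hx
    have := Real.cosh_pos x
    nlinarith

theorem hFun_properties (τ : ℝ) (hτpos : 0 < τ)
    (hτ : Real.cosh (τ / 2) / Real.sinh (τ / 2) = τ / 2) :
    (∀ u : ℝ, hFun (-u) = -hFun u) ∧
    hFun 0 = 0 ∧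
    StrictMonoOn hFun (Set.Icc 0 (τ / 2)) ∧
    hFun (τ / 2) = τ / 2 ∧
    StrictAntiOn hFun (Set.Ici (τ / 2)) ∧
    Filter.Tendsto hFun Filter.atTop (nhds 1) := by
  have hτ2 : (0:ℝ) < τ / 2 := by linarith
  have hs : 0 < Real.sinh (τ / 2) := Real.sinh_pos_iff.2 hτ2
  have hkey : Real.cosh (τ / 2) = τ / 2 * Real.sinh (τ / 2) := by
    field_simp at hτ; linarith
  have hg0 : Real.cosh (τ/2) - (τ/2) * Real.sinh (τ/2) = 0 := by linarith
  have hcont : Continuous hFun := by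
    apply Continuous.div
    · exact continuous_id.add (Real.continuous_sinh.mul Real.continuous_cosh)
    · exact Real.continuous_cosh.pow 2
    · intro x; positivity
  refine ⟨?_, ?_, ?_, ?_, ?_, ?_⟩
  · intro u
    simp [hFun, Real.sinh_neg, Real.cosh_neg]
    ring
  · simp [hFun]
  · apply strictMonoOn_of_deriv_pos (convex_Icc _ _) hcont.continuousOn
    intro x hx
    rw [interior_Icc, Set.mem_Ioo] at hx
    rw [deriv_hFun]
    have hgx : 0 < Real.cosh x - x * Real.sinh x := by
      have := gAnti (Set.mem_Ici.2 hx.1.le) (Set.mem_Ici.2 hτ2.le) hx.2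
      simp only at this
      linarith
    have := Real.cosh_pos x
    positivity
  · unfold hFun
    have hcp : Real.cosh (τ/2) > 0 := Real.cosh_pos _
    have hnum : τ/2 + Real.sinh (τ/2) * Real.cosh (τ/2) = τ/2 * Real.cosh (τ/2) ^ 2 := by
      rw [Real.cosh_sq, hkey]; ring
    rw [hnum, mul_div_assoc, div_self (by positivity), mul_one]
  · apply strictAntiOn_of_deriv_neg (convex_Ici _) hcont.continuousOn
    intro x hx
    rw [interior_Ici, Set.mem_Ioi] at hx
    rw [deriv_hFun]
    have hgx : Real.cosh x - x * Real.sinh x < 0 := by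
      have := gAnti (Set.mem_Ici.2 hτ2.le) (Set.mem_Ici.2 (by linarith : (0:ℝ) ≤ x)) hx
      simp only at this
      linarith
    have hc := Real.cosh_pos x
    have : 0 < Real.cosh x ^ 3 := by positivity
    exact div_neg_of_neg_of_pos (by linarith) this
  · -- limit
    have hsplit : ∀ u : ℝ, hFun u = u / Real.cosh u ^ 2 + Real.tanh u := by
      intro u
      have hc : Real.cosh u ≠ 0 := (Real.cosh_pos u).ne'
      rw [Real.tanh_eq_sinh_div_cosh, hFun]
      field_simp
    have h1 : Tendsto (fun u : ℝ => u / Real.cosh u ^ 2) atTop (nhds 0) := by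
      have hbig : Tendsto (fun u : ℝ => u * Real.exp (-u)) atTop (nhds 0) := by
        simpa using Real.tendsto_pow_mul_exp_neg_atTop_nhds_zero 1
      apply squeeze_zero' (Filter.eventually_atTop.2 ⟨0, fun u hu => by positivity⟩)
        (Filter.eventually_atTop.2 ⟨2, fun u hu => ?_⟩) hbig
      have hcosh : Real.exp u / 2 ≤ Real.cosh u := by
        rw [Real.cosh_eq]
        have := (Real.exp_pos (-u)).le
        linarith
      have h4 : (4:ℝ) ≤ Real.exp u := by
        have h2u : Real.exp 2 ≤ Real.exp u := Real.exp_le_exp.2 hu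
        have he1 : (2.7:ℝ) < Real.exp 1 := lt_trans (by norm_num) Real.exp_one_gt_d9
        have he2 : Real.exp 2 = Real.exp 1 * Real.exp 1 := by rw [← Real.exp_add]; norm_num
        nlinarith
      have hsq : Real.exp u ≤ Real.cosh u ^ 2 := by
        nlinarith [Real.exp_pos u]
      rw [Real.exp_neg]
      have hcp : (0:ℝ) < Real.cosh u ^ 2 := by positivity
      have hup : (0:ℝ) ≤ u := by linarith
      calc u / Real.cosh u ^ 2 ≤ u / Real.exp u :=
            div_le_div_of_nonneg_left hup (Real.exp_pos u) hsq
        _ = u * (Real.exp u)⁻¹ := div_eq_mul_inv _ _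
    have h2 : Tendsto Real.tanh atTop (nhds 1) := by
      have he : Tendsto (fun u : ℝ => Real.exp (-(2 * u))) atTop (nhds 0) := by
        apply Real.tendsto_exp_neg_atTop_nhds_zero.comp
        exact Filter.tendsto_id.const_mul_atTop two_pos
      have heq : ∀ u : ℝ, Real.tanh u =
          (1 - Real.exp (-(2 * u))) / (1 + Real.exp (-(2 * u))) := by
        intro u
        rw [Real.tanh_eq_sinh_div_cosh, Real.sinh_eq, Real.cosh_eq]
        have h1 : Real.exp (-(2*u)) = Real.exp (-u) * Real.exp (-u) := by
          rw [← Real.exp_add]; ring_nf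
        have h2 : Real.exp u * Real.exp (-u) = 1 := by
          rw [← Real.exp_add]; simp
        have hp := Real.exp_pos u
        have hp2 := Real.exp_pos (-u)
        rw [div_eq_div_iff (by positivity) (by nlinarith)]
        nlinarith
      simp only [funext heq]
      have hd : Tendsto (fun u : ℝ => (1 - Real.exp (-(2*u))) / (1 + Real.exp (-(2*u))))
          atTop (nhds ((1 - 0)/(1 + 0))) :=
        (tendsto_const_nhds.sub he).div (tendsto_const_nhds.add he) (by norm_num)
      simpa using hd
    have := h1.add h2
    simp only [zero_add] at this
    exact this.congr (fun u => (hsplit u).symm)
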